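/- For the 3-dimensional real Jordan algebra J₁₂ with basis {e₁, n₁, n₂} and multiplication e₁² = e₁, e₁·nᵢ = (1/2)nᵢ (i = 1,2), nᵢ·nⱼ = 0, every symmetric bilinear 2-cocycle h : J₁₂ × J₁₂ → J₁₂ is a coboundary; that is, the second Jordan cohomology group H²(J₁₂, J₁₂) vanishes. -/

import Mathlib

/-- Multiplication of J₁₂ on ℝ³ with basis e₁ = (1,0,0), n₁ = (0,1,0), n₂ = (0,0,1):
e₁² = e₁, e₁·nᵢ = (1/2)nᵢ, nᵢ·nⱼ = 0. -/
noncomputable def mulJ12 (x y : ℝ × ℝ × ℝ) : ℝ × ℝ × ℝ :=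
  (x.1 * y.1, (x.1 * y.2.1 + x.2.1 * y.1) / 2, (x.1 * y.2.2 + x.2.2 * y.1) / 2)

set_option maxHeartbeats 1000000 in
/-- every symmetric bilinear 2-cocycle of the Jordan algebra J₁₂
is a coboundary, i.e. H²(J₁₂, J₁₂) = 0. -/
theorem H2_J12_vanishes
    (h : (ℝ × ℝ × ℝ) →ₗ[ℝ] (ℝ × ℝ × ℝ) →ₗ[ℝ] (ℝ × ℝ × ℝ))
    (hsymm : ∀ a b : ℝ × ℝ × ℝ, h a b = h b a)
    (hcocycle : ∀ a b : ℝ × ℝ × ℝ,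
      mulJ12 (mulJ12 (h a a) b) a + mulJ12 (h (mulJ12 a a) b) a +
        h (mulJ12 (mulJ12 a a) b) a =
      mulJ12 (mulJ12 a a) (h b a) + mulJ12 (h a a) (mulJ12 b a) +
        h (mulJ12 a a) (mulJ12 b a)) :
    ∃ μ : (ℝ × ℝ × ℝ) →ₗ[ℝ] (ℝ × ℝ × ℝ),
      ∀ a b : ℝ × ℝ × ℝ, h a b = μ (mulJ12 a b) - mulJ12 a (μ b) - mulJ12 (μ a) b := by
  set A := h (1,0,0) (1,0,0) with hA
  set B := h (1,0,0) (0,1,0) with hB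
  set C := h (1,0,0) (0,0,1) with hC
  set D := h (0,1,0) (0,1,0) with hD
  set E := h (0,1,0) (0,0,1) with hE
  set Fv := h (0,0,1) (0,0,1) with hF
  clear_value A B C D E Fv
  have hdec : ∀ u v w : ℝ, ((u,v,w) : ℝ×ℝ×ℝ) = u•((1:ℝ),(0:ℝ),(0:ℝ))+v•(0,1,0)+w•(0,0,1) := by
    intro u v w; simp [Prod.ext_iff]
  have hexp : ∀ x1 x2 x3 y1 y2 y3 : ℝ, h (x1,x2,x3) (y1,y2,y3) =
      (x1*y1)•A + (x1*y2+x2*y1)•B + (x1*y3+x3*y1)•C + (x2*y2)•D +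
      (x2*y3+x3*y2)•E + (x3*y3)•Fv := by
    intro x1 x2 x3 y1 y2 y3
    rw [hdec x1 x2 x3, hdec y1 y2 y3]
    simp only [map_add, map_smul, LinearMap.add_apply, LinearMap.smul_apply]
    rw [hsymm (0,1,0) (1,0,0), hsymm (0,0,1) (1,0,0), hsymm (0,0,1) (0,1,0)]
    rw [← hA, ← hB, ← hC, ← hD, ← hE, ← hF]
    module
  have E1 := hcocycle (1,0,0) (1,0,0)
  simp only [mulJ12] at E1
  norm_num at E1
  simp only [hexp] at E1
  simp only [Prod.ext_iff, Prod.fst_add, Prod.snd_add, Prod.smul_fst, Prod.smul_snd,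
    smul_eq_mul] at E1
  norm_num at E1
  have E2 := hcocycle (0,1,0) (1,0,0)
  simp only [mulJ12] at E2
  norm_num at E2
  simp only [hexp] at E2
  simp only [Prod.ext_iff, Prod.fst_add, Prod.snd_add, Prod.smul_fst, Prod.smul_snd,
    smul_eq_mul] at E2
  norm_num at E2
  have E3 := hcocycle (0,0,1) (1,0,0)
  simp only [mulJ12] at E3
  norm_num at E3
  simp only [hexp] at E3
  simp only [Prod.ext_iff, Prod.fst_add, Prod.snd_add, Prod.smul_fst, Prod.smul_snd,
    smul_eq_mul] at E3
  norm_num at E3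
  have E4 := hcocycle (1,1,0) (1,0,0)
  simp only [mulJ12] at E4
  norm_num at E4
  simp only [hexp] at E4
  simp only [Prod.ext_iff, Prod.fst_add, Prod.snd_add, Prod.smul_fst, Prod.smul_snd,
    smul_eq_mul] at E4
  norm_num at E4
  have E5 := hcocycle (1,0,1) (1,0,0)
  simp only [mulJ12] at E5
  norm_num at E5
  simp only [hexp] at E5
  simp only [Prod.ext_iff, Prod.fst_add, Prod.snd_add, Prod.smul_fst, Prod.smul_snd,
    smul_eq_mul] at E5
  norm_num at E5
  have E6 := hcocycle (0,1,1) (1,0,0)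
  simp only [mulJ12] at E6
  norm_num at E6
  simp only [hexp] at E6
  simp only [Prod.ext_iff, Prod.fst_add, Prod.snd_add, Prod.smul_fst, Prod.smul_snd,
    smul_eq_mul] at E6
  norm_num at E6
  have E7 := hcocycle (1,1,1) (1,0,0)
  simp only [mulJ12] at E7
  norm_num at E7
  simp only [hexp] at E7
  simp only [Prod.ext_iff, Prod.fst_add, Prod.snd_add, Prod.smul_fst, Prod.smul_snd,
    smul_eq_mul] at E7
  norm_num at E7
  have E8 := hcocycle (1,-1,0) (1,0,0)
  simp only [mulJ12] at E8
  norm_num at E8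
  simp only [hexp] at E8
  simp only [Prod.ext_iff, Prod.fst_add, Prod.snd_add, Prod.smul_fst, Prod.smul_snd,
    smul_eq_mul] at E8
  norm_num at E8
  have E9 := hcocycle (1,0,-1) (1,0,0)
  simp only [mulJ12] at E9
  norm_num at E9
  simp only [hexp] at E9
  simp only [Prod.ext_iff, Prod.fst_add, Prod.snd_add, Prod.smul_fst, Prod.smul_snd,
    smul_eq_mul] at E9
  norm_num at E9
  have cA2 : A.2.1 = 0 := by linear_combination (-4) * E1.1
  have cA3 : A.2.2 = 0 := by linear_combination (-4) * E1.2
  have cD1 : D.1 = 0 := by linear_combination 2 * E2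
  have cF1 : Fv.1 = 0 := by linear_combination 2 * E3
  have cE1 : E.1 = 0 := by linear_combination (-1) * E2 + (-1) * E3 + E6
  have cA1 : A.1 = 2*C.2.2 := by linear_combination (-2) * E3 + 2 * E5.2.2 + (-2) * E9.2.2
  have cB2 : B.2.1 = C.2.2 := by linear_combination E2 + (-1) * E3 + (-1) * E4.2.1 + E5.2.2 + E8.2.1 + (-1) * E9.2.2
  have cB3 : B.2.2 = 0 := by linear_combination (-1) * E4.2.2 + E8.2.2
  have cC1 : C.1 = Fv.2.2/2 := by linear_combination (-2) * E1.2 + E5.2.2 + E9.2.2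
  have cC2 : C.2.1 = 0 := by linear_combination (-1) * E5.2.1 + E9.2.1
  have cD3 : D.2.2 = 0 := by linear_combination 4 * E1.2 + (-2) * E4.2.2 + (-2) * E8.2.2
  have cF2 : Fv.2.1 = 0 := by linear_combination 4 * E1.1 + (-2) * E5.2.1 + (-2) * E9.2.1
  have cB1 : B.1 = E.2.2 := by linear_combination 2 * E1.2 + E3 + (-1) * E6 + (-2) * E4.2.2 + (-2) * E5.2.2 + 2 * E7.2.2
  have cD2 : D.2.1 = 2*E.2.2 := by linear_combination 4 * E1.1 + 4 * E1.2 + 2 * E3 + (-2) * E6 + (-2) * E4.2.1 + (-4) * E4.2.2 + (-4) * E5.2.2 + 4 * E7.2.2 + (-2) * E8.2.1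
  have cE2 : E.2.1 = Fv.2.2/2 := by linear_combination (-2) * E1.1 + (-2) * E1.2 + (-1) * E2 + E6 + 2 * E4.2.1 + 2 * E5.2.1 + E5.2.2 + (-2) * E7.2.1 + E9.2.2
  refine ⟨{ toFun := fun x => (-(2*C.2.2)*x.1 - 2*E.2.2*x.2.1 - Fv.2.2*x.2.2, 0, 0),
            map_add' := by intro x y; simp [Prod.ext_iff]; ring,
            map_smul' := by intro c x; simp [Prod.ext_iff]; ring }, ?_⟩
  rintro ⟨a1, a2, a3⟩ ⟨b1, b2, b3⟩
  rw [hexp]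
  simp only [mulJ12, LinearMap.coe_mk, AddHom.coe_mk, Prod.ext_iff, Prod.fst_add, Prod.snd_add,
    Prod.fst_sub, Prod.snd_sub, Prod.smul_fst, Prod.smul_snd, smul_eq_mul]
  simp only [cA1, cA2, cA3, cB1, cB2, cB3, cC1, cC2, cD1, cD2, cD3, cE1, cE2, cF1, cF2]
  norm_num
  refine ⟨by ring, by ring, by ring⟩
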